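/- arXiv:1411.4306 — 7 statements merged into one kernel-verified Lean document; each statement's English description precedes it below -/
import Mathlib

section
/- Let X be a compact metric space and (F_i)_{i=1,…,N} a finite open cover of X. Then there exist open sets F_i' with closure(F_i') ⊆ F_i for each i, such that X = ⋃_{i=1}^N F_i', and such that for every subset I ⊆ {1,…,N}: if ⋂_{i∈I} F_i ≠ ∅ then ⋂_{i∈I} F_i' ≠ ∅. -/
/-- Every finite open cover `(F i)` of a compact metric space `X` admits a shrinking
`(F' i)` (with `closure (F' i) ⊆ F i`, still covering `X`) such that every nonempty
intersection of the `F i` gives a nonempty intersection of the `F' i`. -/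
theorem stmt_4 {X : Type*} [MetricSpace X] [CompactSpace X] {N : ℕ}
    (F : Fin N → Set X) (hopen : ∀ i, IsOpen (F i)) (hcov : (⋃ i, F i) = Set.univ) :
    ∃ F' : Fin N → Set X,
      (∀ i, IsOpen (F' i)) ∧
      (∀ i, closure (F' i) ⊆ F i) ∧
      (⋃ i, F' i) = Set.univ ∧
      ∀ I : Set (Fin N), (⋂ i ∈ I, F i).Nonempty → (⋂ i ∈ I, F' i).Nonempty := by
  classical
  rcases isEmpty_or_nonempty X with hX | hX
  · refine ⟨fun _ => ∅, fun _ => isOpen_empty, fun i => by simp, ?_, ?_⟩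
    · ext x; exact (hX.false x).elim
    · intro I ⟨x, _⟩; exact (hX.false x).elim
  obtain ⟨v, hvcov, hvopen, hvcl⟩ :=
    exists_iUnion_eq_closure_subset hopen (fun x => Set.toFinite _) hcov
  -- choose points in nonempty intersections
  have hxc : ∀ I : Set (Fin N), (⋂ i ∈ I, F i).Nonempty → ∃ x, x ∈ ⋂ i ∈ I, F i :=
    fun I hI => hI
  choose! x hx using hxc
  -- choose radii
  have hrc : ∀ (I : Set (Fin N)) (i : Fin N),
      i ∈ I → (⋂ j ∈ I, F j).Nonempty →
      ∃ r > 0, closure (Metric.ball (x I) r) ⊆ F i := by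
    intro I i hi hI
    have hxi : x I ∈ F i := by
      have := hx I hI
      simp only [Set.mem_iInter] at this
      exact this i hi
    obtain ⟨r, hr, hsub⟩ := Metric.nhds_basis_closedBall.mem_iff.1
      ((hopen i).mem_nhds hxi)
    exact ⟨r, hr, Metric.closure_ball_subset_closedBall.trans hsub⟩
  choose! r hrpos hrsub using hrc
  set B : Set (Fin N) → Fin N → Set X := fun I i =>
    if i ∈ I ∧ (⋂ j ∈ I, F j).Nonempty then Metric.ball (x I) (r I i) else ∅ with hB
  refine ⟨fun i => v i ∪ ⋃ I, B I i, ?_, ?_, ?_, ?_⟩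
  · intro i
    refine (hvopen i).union (isOpen_iUnion fun I => ?_)
    rw [hB]; dsimp only
    split <;> [exact Metric.isOpen_ball; exact isOpen_empty]
  · intro i
    rw [closure_union, closure_iUnion_of_finite]
    refine Set.union_subset (hvcl i) (Set.iUnion_subset fun I => ?_)
    rw [hB]; dsimp only
    split
    · next h => exact hrsub I i h.1 h.2
    · simp
  · rw [← Set.univ_subset_iff, ← hvcov]
    exact Set.iUnion_mono fun i => Set.subset_union_left
  · intro I hI
    refine ⟨x I, ?_⟩
    simp only [Set.mem_iInter]
    intro i hi
    refine Set.mem_union_right _ (Set.mem_iUnion.2 ⟨I, ?_⟩)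
    rw [hB]; dsimp only
    rw [if_pos ⟨hi, hI⟩]
    exact Metric.mem_ball_self (hrpos I i hi hI)
end

section
/- Let U be a locally compact metric space, U' an open subset of U with compact closure, and Z ⊆ U' a subset that is closed in the subspace topology of U'. Suppose Z_1,…,Z_N are subsets of Z that are open in the subspace topology of Z, and for every nonempty K ⊆ {1,…,N} an open subset W_K ⊆ U' is given with W_K ∩ Z = Z_K, where Z_K := ⋂_{i∈K} Z_i. Then there exist open subsets U_K ⊆ W_K for every nonempty K ⊆ {1,…,N} such that U_K ∩ Z = Z_K and U_J ∩ U_K = U_{J∪K} for all nonempty J, K ⊆ {1,…,N}. -/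
open Metric Set

namespace Stmt5Aux

variable {X : Type*} [MetricSpace X]

open Classical in
/-- capped distance to a set; `1` if the set is empty. -/
noncomputable def cd (S : Set X) (x : X) : ℝ :=
  if S.Nonempty then min 1 (Metric.infDist x S) else 1

lemma cd_nonneg (S : Set X) (x : X) : 0 ≤ cd S x := by
  unfold cd; split
  · exact le_min zero_le_one Metric.infDist_nonneg
  · exact zero_le_one

lemma cd_le_one (S : Set X) (x : X) : cd S x ≤ 1 := by
  unfold cd; split
  · exact min_le_left _ _
  · exact le_refl _

lemma cd_lip (S : Set X) (x y : X) : cd S x ≤ cd S y + dist x y := by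
  unfold cd; split
  · have h := Metric.infDist_le_infDist_add_dist (x := x) (y := y) (s := S)
    have hd : (0:ℝ) ≤ dist x y := dist_nonneg
    rcases min_cases 1 (Metric.infDist y S) with ⟨heq, hle⟩ | ⟨heq, hle⟩ <;> rw [heq]
    · exact le_trans (min_le_left _ _) (by linarith)
    · exact le_trans (min_le_right _ _) h
  · linarith [dist_nonneg (x := x) (y := y)]

lemma cd_eq_zero_of_mem {S : Set X} {x : X} (h : x ∈ S) : cd S x = 0 := by
  unfold cd
  rw [if_pos ⟨x, h⟩, Metric.infDist_zero_of_mem h]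
  exact min_eq_right zero_le_one

lemma cd_eq_zero_iff' {S : Set X} {x : X} (h : cd S x = 0) :
    S.Nonempty ∧ x ∈ closure S := by
  unfold cd at h; split at h
  · next hS =>
    rcases min_cases 1 (Metric.infDist x S) with ⟨heq, _⟩ | ⟨heq, _⟩ <;> rw [heq] at h
    · exact absurd h one_ne_zero
    · exact ⟨hS, (Metric.mem_closure_iff_infDist_zero hS).2 h⟩
  · exact absurd h one_ne_zero

lemma cd_pos_of_not_mem_closure {S : Set X} {x : X} (h : x ∉ closure S) : 0 < cd S x :=
  lt_of_le_of_ne (cd_nonneg S x) (fun he => h (cd_eq_zero_iff' he.symm).2)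

lemma exists_dist_lt {S : Set X} {x : X} (h0 : 0 < cd S x) (h1 : cd S x < 1) :
    ∃ z ∈ S, dist x z < 2 * cd S x := by
  by_cases hS : S.Nonempty
  · simp only [cd, hS, if_true] at h0 h1 ⊢
    have hmin : min 1 (Metric.infDist x S) = Metric.infDist x S := by
      rcases min_cases 1 (Metric.infDist x S) with ⟨heq, _⟩ | ⟨heq, _⟩
      · rw [heq] at h1; linarith
      · exact heq
    rw [hmin] at h0 h1 ⊢
    exact (Metric.infDist_lt_iff hS).1 (by linarith)
  · simp only [cd, hS, if_false] at h1
    exact absurd h1 (lt_irrefl _)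

lemma cd_continuous (S : Set X) : Continuous (cd S) := by
  unfold cd
  by_cases hS : S.Nonempty
  · simp only [hS, if_true]
    exact continuous_const.min (Metric.continuous_infDist_pt S)
  · simp only [hS, if_false]
    exact continuous_const

/-- the generating set for the infimum defining `hfun`. -/
def hgen (gk : X → ℝ) (B : Set X) (z : X) : Set ℝ :=
  insert 1 ((fun y => gk y + dist z y) '' B)

noncomputable def hfun (gk : X → ℝ) (B : Set X) (z : X) : ℝ := sInf (hgen gk B z)

lemma hgen_nonempty (gk : X → ℝ) (B : Set X) (z : X) : (hgen gk B z).Nonempty :=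
  ⟨1, Set.mem_insert _ _⟩

lemma hgen_bdd (gk : X → ℝ) (B : Set X) (z : X) (hg : ∀ y, 0 ≤ gk y) :
    BddBelow (hgen gk B z) := by
  refine ⟨0, ?_⟩
  rintro w hw
  rcases Set.mem_insert_iff.1 hw with rfl | ⟨y, _, rfl⟩
  · exact zero_le_one
  · exact add_nonneg (hg y) dist_nonneg

lemma hfun_le_one (gk : X → ℝ) (B : Set X) (z : X) (hg : ∀ y, 0 ≤ gk y) :
    hfun gk B z ≤ 1 :=
  csInf_le (hgen_bdd gk B z hg) (Set.mem_insert _ _)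

lemma hfun_le (gk : X → ℝ) (B : Set X) (z : X) (hg : ∀ y, 0 ≤ gk y) {y : X} (hy : y ∈ B) :
    hfun gk B z ≤ gk y + dist z y :=
  csInf_le (hgen_bdd gk B z hg) (Set.mem_insert_of_mem _ ⟨y, hy, rfl⟩)

lemma le_hfun (gk : X → ℝ) (B : Set X) (z : X) {c : ℝ} (hc : c ≤ 1)
    (h : ∀ y ∈ B, c ≤ gk y + dist z y) : c ≤ hfun gk B z := by
  refine le_csInf (hgen_nonempty gk B z) ?_
  rintro w hw
  rcases Set.mem_insert_iff.1 hw with rfl | ⟨y, hy, rfl⟩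
  · exact hc
  · exact h y hy

lemma hfun_lip (gk : X → ℝ) (B : Set X) (hg : ∀ y, 0 ≤ gk y) (z z' : X) :
    hfun gk B z ≤ hfun gk B z' + dist z z' := by
  have h2 : hfun gk B z - dist z z' ≤ hfun gk B z' := by
    refine le_csInf (hgen_nonempty gk B z') ?_
    rintro w hw
    rcases Set.mem_insert_iff.1 hw with rfl | ⟨y, hy, rfl⟩
    · have := hfun_le_one gk B z hg
      linarith [dist_nonneg (x := z) (y := z')]
    · show hfun gk B z - dist z z' ≤ gk y + dist z' y
      have h3 := hfun_le gk B z hg hy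
      have h4 := dist_triangle z z' y
      linarith
  linarith

lemma isOpen_lt_of_lip (u v : X → ℝ) (hu : Continuous u)
    (hv : ∀ a b, v a ≤ v b + dist a b) : IsOpen {x | u x < v x} := by
  have hvc : Continuous v := by
    refine (LipschitzWith.of_dist_le_mul (K := 1) fun a b => ?_).continuous
    rw [Real.dist_eq, NNReal.coe_one, one_mul]
    refine abs_sub_le_iff.2 ⟨by linarith [hv a b], ?_⟩
    have := hv b a
    rw [dist_comm b a] at this
    linarith
  exact isOpen_lt hu hvc

end Stmt5Aux

open Stmt5Aux

/-- Let `U` be a locally compact metric space, `U'` an open subset with compact closure,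
and `Z ⊆ U'` relatively closed in `U'`.  Given relatively open subsets `Z i ⊆ Z` and, for
every nonempty `K ⊆ {1,…,N}`, open sets `W K ⊆ U'` with `W K ∩ Z = ⋂ i ∈ K, Z i`, there
exist open sets `UU K ⊆ W K` with `UU K ∩ Z = ⋂ i ∈ K, Z i` and
`UU J ∩ UU K = UU (J ∪ K)`. -/
theorem stmt_5 {U : Type*} [MetricSpace U] [LocallyCompactSpace U] {N : ℕ}
    {U' Z : Set U} (hU'open : IsOpen U') (hU'cpt : IsCompact (closure U'))
    (hZU' : Z ⊆ U') (hZclosed : ∃ C : Set U, IsClosed C ∧ Z = C ∩ U')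
    (Zi : Fin N → Set U) (hZiZ : ∀ i, Zi i ⊆ Z)
    (hZiopen : ∀ i, ∃ V : Set U, IsOpen V ∧ Zi i = V ∩ Z)
    (W : Finset (Fin N) → Set U)
    (hWopen : ∀ K : Finset (Fin N), K.Nonempty → IsOpen (W K))
    (hWsub : ∀ K : Finset (Fin N), K.Nonempty → W K ⊆ U')
    (hWZ : ∀ K : Finset (Fin N), K.Nonempty → W K ∩ Z = ⋂ i ∈ K, Zi i) :
    ∃ UU : Finset (Fin N) → Set U,
      (∀ K : Finset (Fin N), K.Nonempty → IsOpen (UU K)) ∧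
      (∀ K : Finset (Fin N), K.Nonempty → UU K ⊆ W K) ∧
      (∀ K : Finset (Fin N), K.Nonempty → UU K ∩ Z = ⋂ i ∈ K, Zi i) ∧
      (∀ J K : Finset (Fin N), J.Nonempty → K.Nonempty → UU J ∩ UU K = UU (J ∪ K)) := by
  classical
  obtain ⟨C, hCclosed, hZC⟩ := hZclosed
  choose V hVopen hZiV using hZiopen
  -- basic distance functions
  let f : Fin N → U → ℝ := fun j => cd (Z \ Zi j)
  let bd : U → ℝ := cd U'ᶜ
  let g : U → ℝ := cd Z
  let gk : Finset (Fin N) → U → ℝ := fun K => cd (W K)ᶜ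
  have gknn : ∀ K y, 0 ≤ gk K y := fun K y => cd_nonneg _ _
  -- the class sets
  let BJ : Finset (Fin N) → Fin N → Set U :=
    fun K j => {y | y ∈ Z ∧ ∀ j' ∈ K, f j y ≤ f j' y}
  -- the scale function
  let Ks : Fin N → Finset (Finset (Fin N)) := fun j => Finset.univ.filter fun K => j ∈ K
  have hKs : ∀ j, (Ks j).Nonempty := fun j =>
    ⟨{j}, Finset.mem_filter.2 ⟨Finset.mem_univ _, Finset.mem_singleton_self j⟩⟩
  let eps : Fin N → U → ℝ := fun j z =>
    (Ks j).inf' (hKs j) fun K => hfun (gk K) (BJ K j) z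
  -- basic facts
  have fpos : ∀ j, ∀ x ∈ Zi j, 0 < f j x := by
    intro j x hx
    apply cd_pos_of_not_mem_closure
    intro hcl
    have h1 : closure (Z \ Zi j) ⊆ (V j)ᶜ := by
      apply closure_minimal ?_ (hVopen j).isClosed_compl
      intro y hy hyV
      exact hy.2 (by rw [hZiV j]; exact ⟨hyV, hy.1⟩)
    have hxV : x ∈ V j := by
      have : x ∈ V j ∩ Z := by rw [← hZiV j]; exact hx
      exact this.1
    exact (h1 hcl) hxV
  have bdpos : ∀ x ∈ U', 0 < bd x := by
    intro x hx
    apply cd_pos_of_not_mem_closure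
    rw [hU'open.isClosed_compl.closure_eq]
    exact fun h => h hx
  have eps_le : ∀ j z K, j ∈ K → eps j z ≤ hfun (gk K) (BJ K j) z := by
    intro j z K hjK
    have hmem : K ∈ Ks j := Finset.mem_filter.2 ⟨Finset.mem_univ _, hjK⟩
    have h : (Ks j).inf' (hKs j) (fun K' => hfun (gk K') (BJ K' j) z)
        ≤ hfun (gk K) (BJ K j) z :=
      Finset.inf'_le _ hmem
    exact h
  have eps_lip : ∀ j z z', eps j z ≤ eps j z' + dist z z' := by
    intro j z z'
    obtain ⟨K₀, hK₀, hEq⟩ :=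
      Finset.exists_mem_eq_inf' (hKs j) (fun K => hfun (gk K) (BJ K j) z')
    have h0 : (Ks j).inf' (hKs j) (fun K' => hfun (gk K') (BJ K' j) z)
        ≤ hfun (gk K₀) (BJ K₀ j) z := Finset.inf'_le _ hK₀
    calc eps j z ≤ hfun (gk K₀) (BJ K₀ j) z := h0
      _ ≤ hfun (gk K₀) (BJ K₀ j) z' + dist z z' := hfun_lip _ _ (gknn K₀) z z'
      _ = eps j z' + dist z z' := by
          exact congrArg (· + dist z z') hEq.symm
  have eps_pos : ∀ j, ∀ z ∈ Zi j, 0 < eps j z := by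
    intro j z hz
    have hzZ : z ∈ Z := hZiZ j hz
    show (0:ℝ) < (Ks j).inf' (hKs j) fun K => hfun (gk K) (BJ K j) z
    refine (Finset.lt_inf'_iff _).2 ?_
    intro K hKmem
    have hjK : j ∈ K := (Finset.mem_filter.1 hKmem).2
    rcases (gknn K z).lt_or_eq with hgkz | hgkz
    · -- 0 < gk K z : use min 1 (gk K z) as a lower bound
      refine lt_of_lt_of_le (lt_min one_pos hgkz)
        (le_hfun (gk K) (BJ K j) z (c := min 1 (gk K z)) (min_le_left _ _) ?_)
      intro y hy
      have h := cd_lip ((W K)ᶜ) z y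
      calc min 1 (gk K z) ≤ gk K z := min_le_right _ _
        _ ≤ gk K y + dist z y := h
    · -- gk K z = 0
      obtain ⟨hne, hclW⟩ := cd_eq_zero_iff' hgkz.symm
      have hzW : z ∉ W K := by
        have hcc : z ∈ (W K)ᶜ := by
          rw [← (hWopen K ⟨j, hjK⟩).isClosed_compl.closure_eq]; exact hclW
        exact hcc
      have hzK : ∃ j' ∈ K, z ∉ Zi j' := by
        by_contra hcon
        push_neg at hcon
        have : z ∈ W K ∩ Z := by
          rw [hWZ K ⟨j, hjK⟩]
          exact Set.mem_iInter₂.2 hcon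
        exact hzW this.1
      obtain ⟨j', hj'K, hzj'⟩ := hzK
      have hfj' : f j' z = 0 := cd_eq_zero_of_mem ⟨hzZ, hzj'⟩
      have ha : 0 < f j z := fpos j z hz
      refine lt_of_lt_of_le (lt_min one_pos (by linarith : (0:ℝ) < f j z / 2))
        (le_hfun (gk K) (BJ K j) z (c := min 1 (f j z / 2)) (min_le_left _ _) ?_)
      intro y hy
      obtain ⟨hyZ, hymin⟩ := hy
      have h1 : f j' y ≤ f j' z + dist y z := cd_lip _ _ _
      have h2 : f j z ≤ f j y + dist z y := cd_lip _ _ _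
      have h3 : f j y ≤ f j' y := hymin j' hj'K
      have hdc : dist y z = dist z y := dist_comm y z
      have h4 : min 1 (f j z / 2) ≤ dist z y := by
        have : f j z ≤ 2 * dist z y := by linarith
        calc min 1 (f j z / 2) ≤ f j z / 2 := min_le_right _ _
          _ ≤ dist z y := by linarith
      linarith [gknn K y]
  -- the per-index open sets
  let A : Fin N → Set U := fun j =>
    {x | 4 * g x < f j x ∧ 4 * g x < bd x ∧ 4 * g x < eps j x}
  have Aopen : ∀ j, IsOpen (A j) := by
    intro j
    have hcont : Continuous fun x => 4 * g x :=
      continuous_const.mul (cd_continuous Z)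
    have h1 : IsOpen {x : U | 4 * g x < f j x} :=
      isOpen_lt_of_lip _ _ hcont (fun a b => cd_lip _ a b)
    have h2 : IsOpen {x : U | 4 * g x < bd x} :=
      isOpen_lt_of_lip _ _ hcont (fun a b => cd_lip _ a b)
    have h3 : IsOpen {x : U | 4 * g x < eps j x} :=
      isOpen_lt_of_lip _ _ hcont (fun a b => eps_lip j a b)
    have hA : A j = {x : U | 4 * g x < f j x} ∩
        ({x : U | 4 * g x < bd x} ∩ {x : U | 4 * g x < eps j x}) := rfl
    rw [hA]
    exact h1.inter (h2.inter h3)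
  refine ⟨fun K => ⋂ j ∈ K, A j, ?_, ?_, ?_, ?_⟩
  · -- openness
    intro K _
    exact isOpen_biInter_finset fun j _ => Aopen j
  · -- contained in W K
    intro K hK x hx
    have hxA : ∀ j ∈ K, x ∈ A j := Set.mem_iInter₂.1 hx
    obtain ⟨j₀, hj₀⟩ := hK
    obtain ⟨hx1, hx2, hx3⟩ := hxA j₀ hj₀
    have hgx0 : 0 ≤ g x := cd_nonneg _ _
    rcases hgx0.lt_or_eq with hδ | hδ
    · -- 0 < g x
      have hδ1 : g x < 1 := by
        have := cd_le_one U'ᶜ x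
        linarith
      obtain ⟨z, hzZ, hdz⟩ := exists_dist_lt hδ hδ1
      have trans_eps : ∀ j ∈ K, 2 * g x < eps j z := by
        intro j hj
        obtain ⟨_, _, h3⟩ := hxA j hj
        have := eps_lip j x z
        linarith
      obtain ⟨j₁, hj₁K, hj₁min⟩ :=
        Finset.exists_min_image K (fun j => f j z) ⟨j₀, hj₀⟩
      have hzBJ : z ∈ BJ K j₁ := ⟨hzZ, fun j' hj' => hj₁min j' hj'⟩
      have hgkz : 2 * g x < gk K z := by
        by_contra hcon
        push_neg at hcon
        have h4 : hfun (gk K) (BJ K j₁) z ≤ gk K z + dist z z :=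
          hfun_le _ _ _ (gknn K) hzBJ
        rw [dist_self] at h4
        have h5 := eps_le j₁ z K hj₁K
        have h6 := trans_eps j₁ hj₁K
        linarith
      have hgkx : 0 < gk K x := by
        have h := cd_lip ((W K)ᶜ) z x
        have hdc : dist z x = dist x z := dist_comm z x
        have : gk K z ≤ gk K x + dist x z := by rw [← hdc]; exact h
        linarith
      -- conclude x ∈ W K
      by_contra hxW
      have : gk K x = 0 := cd_eq_zero_of_mem hxW
      linarith
    · -- g x = 0
      obtain ⟨hZne, hxcl⟩ := cd_eq_zero_iff' hδ.symm
      have hxU' : x ∈ U' := by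
        by_contra hxU
        have : bd x = 0 := cd_eq_zero_of_mem hxU
        linarith
      have hxZ : x ∈ Z := by
        rw [hZC]
        refine ⟨?_, hxU'⟩
        have hcl : closure Z ⊆ C := by
          rw [← hCclosed.closure_eq]
          exact closure_mono (by rw [hZC]; exact Set.inter_subset_left)
        exact hcl hxcl
      have hxZi : ∀ j ∈ K, x ∈ Zi j := by
        intro j hj
        obtain ⟨h1, _, _⟩ := hxA j hj
        by_contra hxj
        have : f j x = 0 := cd_eq_zero_of_mem ⟨hxZ, hxj⟩
        linarith
      have : x ∈ W K ∩ Z := by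
        rw [hWZ K ⟨j₀, hj₀⟩]
        exact Set.mem_iInter₂.2 hxZi
      exact this.1
  · -- trace on Z
    intro K hK
    ext x
    constructor
    · rintro ⟨hxUU, hxZ⟩
      refine Set.mem_iInter₂.2 fun j hj => ?_
      obtain ⟨h1, _, _⟩ := Set.mem_iInter₂.1 hxUU j hj
      have hg0 : g x = 0 := cd_eq_zero_of_mem hxZ
      rw [hg0] at h1
      by_contra hxj
      have : f j x = 0 := cd_eq_zero_of_mem ⟨hxZ, hxj⟩
      linarith
    · intro hx
      obtain ⟨j₀, hj₀⟩ := hK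
      have hxZ : x ∈ Z := hZiZ j₀ (Set.mem_iInter₂.1 hx j₀ hj₀)
      refine ⟨Set.mem_iInter₂.2 fun j hj => ?_, hxZ⟩
      have hxj : x ∈ Zi j := Set.mem_iInter₂.1 hx j hj
      have hg0 : g x = 0 := cd_eq_zero_of_mem hxZ
      refine ⟨?_, ?_, ?_⟩
      · rw [hg0]; simpa using fpos j x hxj
      · rw [hg0]; simpa using bdpos x (hZU' hxZ)
      · rw [hg0]; simpa using eps_pos j x hxj
  · -- intersections
    intro J K _ _
    ext x
    simp only [Set.mem_inter_iff, Set.mem_iInter, Finset.mem_union]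
    constructor
    · rintro ⟨h1, h2⟩ j hj
      rcases hj with hj | hj
      · exact h1 j hj
      · exact h2 j hj
    · intro h
      exact ⟨fun j hj => h j (Or.inl hj), fun j hj => h j (Or.inr hj)⟩
end

section
/- Let 𝓘 be a finite partially ordered set such that (a) every subset of 𝓘 possessing an upper bound in 𝓘 has a least upper bound in 𝓘, and (b) every J ∈ 𝓘 is the least upper bound of the set m(J) of minimal elements of 𝓘 that are ≤ J. Let X be a compact metrizable space and (P_I)_{I∈𝓘} an open cover of X such that whenever P_I ∩ P_J ≠ ∅, the pair {I, J} has an upper bound in 𝓘 and P_I ∩ P_J ⊆ P_{I∨J}, where I∨J denotes the least upper bound. Then there exist open subsets Z_I ⊆ X (possibly empty) for I ∈ 𝓘 such that: (i) closure(Z_I) ⊆ P_I for all I; (ii) if closure(Z_I) ∩ closure(Z_J) ≠ ∅ then I ≤ J or J ≤ I; (iii) X = ⋃_{I∈𝓘} Z_I. -/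
/-- Cover reduction: let `α` be a finite poset such that (a) every subset with an upper
bound has a least upper bound, and (b) every element is the least upper bound of the set
of minimal elements below it.  Given an open cover `(P I)` of a compact metrizable space
`X` such that `P I ∩ P J ≠ ∅` implies `{I, J}` has a least upper bound `K` with
`P I ∩ P J ⊆ P K`, there is a "cover reduction" `(Z I)`. -/
theorem stmt_6 {α : Type*} [PartialOrder α] [Finite α]
    (ha : ∀ S : Set α, (upperBounds S).Nonempty → ∃ l, IsLUB S l)
    (hb : ∀ J : α, IsLUB {H : α | IsMin H ∧ H ≤ J} J)
    {X : Type*} [TopologicalSpace X] [CompactSpace X] [TopologicalSpace.MetrizableSpace X]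
    (P : α → Set X) (hP : ∀ I, IsOpen (P I)) (hPcov : (⋃ I, P I) = Set.univ)
    (hPcap : ∀ I J : α, (P I ∩ P J).Nonempty → ∃ K, IsLUB {I, J} K ∧ P I ∩ P J ⊆ P K) :
    ∃ Z : α → Set X,
      (∀ I, IsOpen (Z I)) ∧
      (∀ I, closure (Z I) ⊆ P I) ∧
      (∀ I J, (closure (Z I) ∩ closure (Z J)).Nonempty → I ≤ J ∨ J ≤ I) ∧
      (⋃ I, Z I) = Set.univ := by
  classical
  letI : MetricSpace X := TopologicalSpace.metrizableSpaceMetric X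
  -- continuous functions vanishing exactly off `P I`
  set f : α → X → ℝ := fun I x =>
    if (P I)ᶜ.Nonempty then Metric.infDist x (P I)ᶜ else 1 with hfdef
  have hfc : ∀ I, Continuous (f I) := by
    intro I
    by_cases h : (P I)ᶜ.Nonempty
    · simpa [hfdef, h] using Metric.continuous_infDist_pt ((P I)ᶜ)
    · simpa [hfdef, h] using continuous_const
  have hfpos : ∀ I x, x ∈ P I → 0 < f I x := by
    intro I x hx
    by_cases h : (P I)ᶜ.Nonempty
    · have := ((hP I).isClosed_compl.notMem_iff_infDist_pos h).1 (by simpa using hx)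
      simpa [hfdef, h] using this
    · simp [hfdef, h]
  have hfzero : ∀ I x, x ∉ P I → f I x = 0 := by
    intro I x hx
    have h : (P I)ᶜ.Nonempty := ⟨x, hx⟩
    simpa [hfdef, h] using Metric.infDist_zero_of_mem (show x ∈ (P I)ᶜ from hx)
  have hfmem : ∀ I x, 0 < f I x → x ∈ P I := by
    intro I x hx
    by_contra hmem
    rw [hfzero I x hmem] at hx
    exact lt_irrefl 0 hx
  -- the intermediate open cover
  set U : α → Set X := fun I =>
    {x | 0 < f I x ∧ ∀ J, ¬(I ≤ J ∨ J ≤ I) → f J x < f I x} with hUdef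
  have hUopen : ∀ I, IsOpen (U I) := by
    intro I
    have : U I = {x | 0 < f I x} ∩
        ⋂ J : α, {x | ¬(I ≤ J ∨ J ≤ I) → f J x < f I x} := by
      ext x; simp [hUdef, Set.mem_iInter]
    rw [this]
    refine IsOpen.inter (isOpen_lt continuous_const (hfc I)) ?_
    refine isOpen_iInter_of_finite fun J => ?_
    by_cases h : ¬(I ≤ J ∨ J ≤ I)
    · have : {x | ¬(I ≤ J ∨ J ≤ I) → f J x < f I x} = {x | f J x < f I x} := by
        ext x; simp [h]
      rw [this]; exact isOpen_lt (hfc J) (hfc I)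
    · have : {x | ¬(I ≤ J ∨ J ≤ I) → f J x < f I x} = Set.univ := by
        ext x; simp [h]
      rw [this]; exact isOpen_univ
  have hUsub : ∀ I, U I ⊆ P I := fun I x hx => hfmem I x hx.1
  -- `U` covers `X`
  have hUcov : ∀ x : X, ∃ I, x ∈ U I := by
    intro x
    set S : Set α := {I | x ∈ P I} with hSdef
    have hSne : S.Nonempty := by
      have : x ∈ ⋃ I, P I := by rw [hPcov]; trivial
      obtain ⟨I, hI⟩ := Set.mem_iUnion.1 this
      exact ⟨I, hI⟩
    have hSdir : ∀ a ∈ S, ∀ b ∈ S, ∃ c ∈ S, a ≤ c ∧ b ≤ c := by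
      intro a ha b hb
      obtain ⟨K, hK, hKsub⟩ := hPcap a b ⟨x, ha, hb⟩
      refine ⟨K, hKsub ⟨ha, hb⟩, ?_, ?_⟩
      · exact hK.1 (Set.mem_insert _ _)
      · exact hK.1 (Set.mem_insert_of_mem _ rfl)
    obtain ⟨M, hM, hMmax⟩ := Set.Finite.exists_maximalFor id S (Set.toFinite S) hSne
    have hMtop : ∀ a ∈ S, a ≤ M := by
      intro a ha
      obtain ⟨c, hc, hMc, hac⟩ := hSdir M hM a ha
      have := hMmax hc hMc
      simp only [id] at this
      exact hac.trans this
    refine ⟨M, hfpos M x hM, fun J hJ => ?_⟩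
    have hxJ : x ∉ P J := by
      intro hxJ
      exact hJ (Or.inr (hMtop J hxJ))
    rw [hfzero J x hxJ]
    exact hfpos M x hM
  -- shrink `U` to `Z` with closures inside `U`
  haveI : NormalSpace X := by infer_instance
  obtain ⟨Z, hZcov, hZopen, hZcl⟩ :=
    exists_subset_iUnion_closure_subset (s := Set.univ) (u := U) isClosed_univ hUopen
      (fun x _ => Set.toFinite _) (fun x _ => Set.mem_iUnion.2 (hUcov x))
  refine ⟨Z, hZopen, ?_, ?_, ?_⟩
  · exact fun I => (hZcl I).trans (hUsub I)
  · intro I J ⟨x, hxI, hxJ⟩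
    by_contra hcomp
    have hxUI : x ∈ U I := hZcl I hxI
    have hxUJ : x ∈ U J := hZcl J hxJ
    have h1 : f J x < f I x := hxUI.2 J hcomp
    have h2 : f I x < f J x := hxUJ.2 I (fun h => hcomp h.symm)
    exact lt_irrefl _ (h1.trans h2)
  · exact Set.eq_univ_of_univ_subset hZcov
end

section
/- Let X be a compact metric space, N ≥ 1, and let 𝓘 be a collection of nonempty subsets of {1,…,N}. Suppose (Z_J)_{J∈𝓘} are open subsets of X with X = ⋃_{J∈𝓘} Z_J, such that whenever closure(Z_I) ∩ closure(Z_J) ≠ ∅ one has I ⊆ J or J ⊆ I. Then there exist continuous functions β_i : X → [0,1] for i = 1,…,N with ∑_{i=1}^N β_i(x) = 1 for all x ∈ X, and such that β_i(x) = 0 whenever there exists J ∈ 𝓘 with i ∉ J and x ∈ closure(Z_J). In particular, ∑_{i∈J} β_i(x) = 1 for every J ∈ 𝓘 and every x ∈ Z_J. -/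
/-- Partition of unity adapted to a cover reduction: given a cover of a compact metric
space `X` by open sets `Z J`, indexed by a collection `C` of nonempty subsets of
`{1,…,N}`, whose closures intersect only for nested index sets, there are continuous
functions `β i : X → [0,1]` summing to `1` with `β i x = 0` whenever `x ∈ closure (Z J)`
for some `J ∈ C` with `i ∉ J`; in particular `∑ i ∈ J, β i x = 1` on `Z J`. -/
theorem stmt_7 {X : Type*} [MetricSpace X] [CompactSpace X] {N : ℕ} (hN : 1 ≤ N)
    (C : Set (Finset (Fin N))) (hC : ∀ J ∈ C, J.Nonempty)
    (Z : Finset (Fin N) → Set X)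
    (hZopen : ∀ J ∈ C, IsOpen (Z J))
    (hZcov : (⋃ J ∈ C, Z J) = Set.univ)
    (hZnest : ∀ I ∈ C, ∀ J ∈ C, (closure (Z I) ∩ closure (Z J)).Nonempty → I ⊆ J ∨ J ⊆ I) :
    ∃ β : Fin N → X → ℝ,
      (∀ i, Continuous (β i)) ∧
      (∀ i x, β i x ∈ Set.Icc (0 : ℝ) 1) ∧
      (∀ x, ∑ i, β i x = 1) ∧
      (∀ i x, (∃ J ∈ C, i ∉ J ∧ x ∈ closure (Z J)) → β i x = 0) ∧
      (∀ J ∈ C, ∀ x ∈ Z J, ∑ i ∈ J, β i x = 1) := by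
  classical
  set F : Fin N → Set X := fun i => ⋃ J ∈ {J ∈ C | i ∉ J}, closure (Z J) with hF
  have hFclosed : ∀ i, IsClosed (F i) := by
    intro i
    apply Set.Finite.isClosed_biUnion (Set.toFinite _)
    intro J _; exact isClosed_closure
  have hmemF : ∀ i x, (∃ J ∈ C, i ∉ J ∧ x ∈ closure (Z J)) → x ∈ F i := by
    rintro i x ⟨J, hJ, hiJ, hx⟩
    exact Set.mem_biUnion ⟨hJ, hiJ⟩ hx
  set g : Fin N → X → ℝ := fun i x =>
    if (F i).Nonempty then Metric.infDist x (F i) else 1 with hg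
  have hgcont : ∀ i, Continuous (g i) := by
    intro i
    by_cases h : (F i).Nonempty <;> simp only [hg, h, if_true, if_false]
    · exact Metric.continuous_infDist_pt _
    · exact continuous_const
  have hgnonneg : ∀ i x, 0 ≤ g i x := by
    intro i x
    by_cases h : (F i).Nonempty <;> simp only [hg, h, if_true, if_false]
    · exact Metric.infDist_nonneg
    · norm_num
  have hgzero : ∀ i x, x ∈ F i → g i x = 0 := by
    intro i x hx
    have hne : (F i).Nonempty := ⟨x, hx⟩
    simp only [hg, hne, if_true]
    exact Metric.infDist_zero_of_mem hx
  -- positivity of the sum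
  have hpos : ∀ x, 0 < ∑ j, g j x := by
    intro x
    -- find J₀ ∈ C with x ∈ Z J₀
    have hx : x ∈ ⋃ J ∈ C, Z J := by rw [hZcov]; trivial
    obtain ⟨J₀, hJ₀C, hxJ₀⟩ := Set.mem_iUnion₂.mp hx
    -- the set of J ∈ C whose closure contains x
    set T : Set (Finset (Fin N)) := {J ∈ C | x ∈ closure (Z J)} with hT
    have hTfin : T.Finite := Set.toFinite T
    have hJ₀T : J₀ ∈ T := ⟨hJ₀C, subset_closure hxJ₀⟩
    obtain ⟨Jm, hJmT, hJmmin⟩ := hTfin.toFinset.exists_min_image Finset.card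
      ⟨J₀, hTfin.mem_toFinset.mpr hJ₀T⟩
    rw [hTfin.mem_toFinset] at hJmT
    have hJmsub : ∀ J' ∈ T, Jm ⊆ J' := by
      intro J' hJ'T
      have hcomp := hZnest Jm hJmT.1 J' hJ'T.1 ⟨x, hJmT.2, hJ'T.2⟩
      rcases hcomp with h | h
      · exact h
      · have hcard := hJmmin J' (hTfin.mem_toFinset.mpr hJ'T)
        rw [Finset.eq_of_subset_of_card_le h hcard]
    obtain ⟨i, hiJm⟩ := hC Jm hJmT.1
    have hxF : x ∉ F i := by
      intro hxF
      obtain ⟨J', hJ', hxJ'⟩ := Set.mem_iUnion₂.mp hxF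
      exact hJ'.2 (hJmsub J' ⟨hJ'.1, hxJ'⟩ hiJm)
    have hgi : 0 < g i x := by
      by_cases h : (F i).Nonempty <;> simp only [hg, h, if_true, if_false]
      · exact ((hFclosed i).notMem_iff_infDist_pos h).mp hxF
      · norm_num
    exact Finset.sum_pos' (fun j _ => hgnonneg j x) ⟨i, Finset.mem_univ i, hgi⟩
  set G : X → ℝ := fun x => ∑ j, g j x with hG
  have hGpos : ∀ x, 0 < G x := hpos
  refine ⟨fun i x => g i x / G x, ?_, ?_, ?_, ?_, ?_⟩
  · intro i
    exact (hgcont i).div (continuous_finset_sum _ fun j _ => hgcont j)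
      (fun x => (hGpos x).ne')
  · intro i x
    constructor
    · exact div_nonneg (hgnonneg i x) (hGpos x).le
    · apply div_le_one_of_le₀ _ (hGpos x).le
      exact Finset.single_le_sum (fun j _ => hgnonneg j x) (Finset.mem_univ i)
  · intro x
    rw [← Finset.sum_div]
    exact div_self (hGpos x).ne'
  · intro i x hx
    show g i x / G x = 0
    rw [hgzero i x (hmemF i x hx), zero_div]
  · intro J hJ x hx
    have hzero : ∀ i ∈ Finset.univ \ J, g i x / G x = 0 := by
      intro i hi
      rw [Finset.mem_sdiff] at hi
      rw [hgzero i x (hmemF i x ⟨J, hJ, hi.2, subset_closure hx⟩), zero_div]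
    have := Finset.sum_subset (Finset.subset_univ J) (fun i _ hi =>
      hzero i (Finset.mem_sdiff.mpr ⟨Finset.mem_univ i, hi⟩))
    rw [this, ← Finset.sum_div]
    exact div_self (hGpos x).ne'
end

section
/- Let X be a Hausdorff topological space which admits an exhaustion X = ⋃_{k≥1} O_k by open sets O_k with compact closure satisfying closure(O_k) ⊆ O_{k+1} for all k. Let R be an equivalence relation on X which is closed as a subset of X × X. Then the quotient space X/R, with the quotient topology, is Hausdorff. -/
open Set

/-- Saturation of a set under an equivalence relation. -/
def sat11 {X : Type*} (s : Setoid X) (S : Set X) : Set X := {x | ∃ y ∈ S, s.r y x}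

lemma subset_sat11 {X : Type*} (s : Setoid X) (S : Set X) : S ⊆ sat11 s S :=
  fun a ha => ⟨a, ha, s.iseqv.refl a⟩

lemma sat11_mono {X : Type*} (s : Setoid X) {S T : Set X} (h : S ⊆ T) :
    sat11 s S ⊆ sat11 s T := fun _ ⟨y, hy, hr⟩ => ⟨y, h hy, hr⟩

/-- The saturation of a compact set under a closed equivalence relation is closed. -/
lemma isClosed_sat11 {X : Type*} [TopologicalSpace X] (s : Setoid X)
    (hclosed : IsClosed {p : X × X | s.r p.1 p.2}) {K : Set X} (hK : IsCompact K) :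
    IsClosed (sat11 s K) := by
  haveI : CompactSpace ↥K := isCompact_iff_compactSpace.mp hK
  have heq : sat11 s K = Prod.snd '' {p : ↥K × X | s.r (p.1 : X) p.2} := by
    ext x
    constructor
    · rintro ⟨y, hy, hr⟩; exact ⟨⟨⟨y, hy⟩, x⟩, hr, rfl⟩
    · rintro ⟨⟨⟨y, hy⟩, x'⟩, hr, rfl⟩; exact ⟨y, hy, hr⟩
  rw [heq]
  apply isClosedMap_snd_of_compactSpace
  exact hclosed.preimage ((continuous_subtype_val.prodMap continuous_id))

/-- Separation lemma in a locally compact Hausdorff space. -/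
lemma sep11 {X : Type*} [TopologicalSpace X] [T2Space X] [LocallyCompactSpace X]
    {C F : Set X} (hC : IsCompact C) (hF : IsClosed F) (hd : ∀ z ∈ C, z ∉ F) :
    ∃ W : Set X, IsOpen W ∧ C ⊆ W ∧ IsCompact (closure W) ∧ ∀ z ∈ closure W, z ∉ F := by
  obtain ⟨L, hL, hCL, hLF⟩ := exists_compact_between hC hF.isOpen_compl
    (fun z hz => hd z hz)
  refine ⟨interior L, isOpen_interior, hCL, ?_, ?_⟩
  · exact hL.of_isClosed_subset isClosed_closure (closure_minimal interior_subset hL.isClosed)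
  · intro z hz
    exact hLF (closure_minimal interior_subset hL.isClosed hz)

/-- (Bourbaki) Let `X` be a Hausdorff space exhausted by open sets `O k` with compact
closures satisfying `closure (O k) ⊆ O (k+1)`.  If `s` is an equivalence relation on `X`
which is closed as a subset of `X × X`, then the quotient `X/s` is Hausdorff. -/
theorem stmt_11 {X : Type*} [TopologicalSpace X] [T2Space X]
    (O : ℕ → Set X) (hOopen : ∀ k, IsOpen (O k))
    (hOcpt : ∀ k, IsCompact (closure (O k)))
    (hOmono : ∀ k, closure (O k) ⊆ O (k + 1))
    (hOcov : (⋃ k, O k) = Set.univ)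
    (s : Setoid X) (hclosed : IsClosed {p : X × X | s.r p.1 p.2}) :
    T2Space (Quotient s) := by
  classical
  -- basic facts about the exhaustion
  have hOsub : ∀ k, O k ⊆ O (k + 1) := fun k => subset_closure.trans (hOmono k)
  have hOmono' : Monotone O := monotone_nat_of_le_succ hOsub
  have hmemO : ∀ x : X, ∃ k, x ∈ O k := by
    intro x
    have : x ∈ ⋃ k, O k := hOcov ▸ Set.mem_univ x
    exact Set.mem_iUnion.mp this
  haveI : WeaklyLocallyCompactSpace X := by
    constructor
    intro x
    obtain ⟨k, hk⟩ := hmemO x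
    exact ⟨closure (O k), hOcpt k, Filter.mem_of_superset ((hOopen k).mem_nhds hk) subset_closure⟩
  -- T2 separation in the quotient
  constructor
  intro a b hab
  obtain ⟨x, rfl⟩ := Quotient.exists_rep a
  obtain ⟨y, rfl⟩ := Quotient.exists_rep b
  have hxy : ¬ s.r x y := fun h => hab (Quotient.sound h)
  -- the two equivalence classes
  set A : Set X := {z | s.r x z} with hA_def
  set B : Set X := {z | s.r y z} with hB_def
  have hA_closed : IsClosed A :=
    hclosed.preimage (Continuous.prodMk continuous_const continuous_id)
  have hB_closed : IsClosed B :=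
    hclosed.preimage (Continuous.prodMk continuous_const continuous_id)
  have hA_satur : ∀ z ∈ A, ∀ w, s.r z w → w ∈ A := fun z hz w hw => s.iseqv.trans hz hw
  have hB_satur : ∀ z ∈ B, ∀ w, s.r z w → w ∈ B := fun z hz w hw => s.iseqv.trans hz hw
  have hAB : ∀ z, z ∈ A → z ∈ B → False := fun z hzA hzB =>
    hxy (s.iseqv.trans hzA (s.iseqv.symm hzB))
  -- invariant for the inductive construction
  set Inv : Set X × Set X → Prop := fun UV =>
    IsOpen UV.1 ∧ IsOpen UV.2 ∧ IsCompact (closure UV.1) ∧ IsCompact (closure UV.2) ∧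
    (∀ u ∈ closure UV.1, ∀ v ∈ closure UV.2, ¬ s.r u v) ∧
    (∀ z ∈ A, z ∉ closure UV.2) ∧ (∀ z ∈ B, z ∉ closure UV.1) with hInv_def
  -- the inductive step
  have hstep : ∀ (n : ℕ) (UV : Set X × Set X), Inv UV →
      ∃ UV' : Set X × Set X, Inv UV' ∧ UV.1 ⊆ UV'.1 ∧ UV.2 ⊆ UV'.2 ∧
        sat11 s (closure UV.1) ∩ closure (O (n+1)) ⊆ UV'.1 ∧
        A ∩ closure (O (n+1)) ⊆ UV'.1 ∧
        sat11 s (closure UV.2) ∩ closure (O (n+1)) ⊆ UV'.2 ∧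
        B ∩ closure (O (n+1)) ⊆ UV'.2 := by
    rintro n ⟨U, V⟩ ⟨hUo, hVo, hUc, hVc, hD, hAV, hBU⟩
    simp only at hUo hVo hUc hVc hD hAV hBU ⊢
    set KU : Set X := closure U ∪ (A ∩ closure (O (n+1))) with hKU_def
    set KV : Set X := closure V ∪ (B ∩ closure (O (n+1))) with hKV_def
    have hKUc : IsCompact KU := hUc.union ((hOcpt (n+1)).inter_left hA_closed)
    have hKVc : IsCompact KV := hVc.union ((hOcpt (n+1)).inter_left hB_closed)
    -- no element of KU is related to an element of KV
    have hKUKV : ∀ u ∈ KU, ∀ v ∈ KV, ¬ s.r u v := by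
      rintro u (hu | ⟨huA, -⟩) v (hv | ⟨hvB, -⟩) hr
      · exact hD u hu v hv hr
      · exact hBU u (hB_satur v hvB u (s.iseqv.symm hr)) hu
      · exact hAV v (hA_satur u huA v hr) hv
      · exact hAB v (hA_satur u huA v hr) hvB
    -- first separation: around sat KU
    set CU : Set X := sat11 s KU ∩ closure (O (n+1)) with hCU_def
    have hCUc : IsCompact CU := (hOcpt (n+1)).inter_left (isClosed_sat11 s hclosed hKUc)
    set FU : Set X := sat11 s KV ∪ B with hFU_def
    have hFUcl : IsClosed FU := (isClosed_sat11 s hclosed hKVc).union hB_closed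
    have hCUFU : ∀ z ∈ CU, z ∉ FU := by
      rintro z ⟨⟨u, hu, hru⟩, -⟩ (⟨v, hv, hrv⟩ | hzB)
      · exact hKUKV u hu v hv (s.iseqv.trans hru (s.iseqv.symm hrv))
      · rcases hu with hu | ⟨huA, -⟩
        · exact hBU u (hB_satur z hzB u (s.iseqv.symm hru)) hu
        · exact hAB z (hA_satur u huA z hru) hzB
    obtain ⟨WU, hWUo, hCUWU, hWUc, hWUF⟩ := sep11 hCUc hFUcl hCUFU
    set U' : Set X := U ∪ WU with hU'_def
    have hU'cl : closure U' = closure U ∪ closure WU := closure_union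
    have hU'c : IsCompact (closure U') := hU'cl ▸ hUc.union hWUc
    -- second separation: around sat KV
    set CV : Set X := sat11 s KV ∩ closure (O (n+1)) with hCV_def
    have hCVc : IsCompact CV := (hOcpt (n+1)).inter_left (isClosed_sat11 s hclosed hKVc)
    set FV : Set X := sat11 s (closure U') ∪ A with hFV_def
    have hFVcl : IsClosed FV := (isClosed_sat11 s hclosed hU'c).union hA_closed
    have hCVFV : ∀ z ∈ CV, z ∉ FV := by
      rintro z ⟨⟨v, hv, hrv⟩, -⟩ (⟨u, hu, hru⟩ | hzA)
      · -- u ∈ closure U' related to z, v ∈ KV related to z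
        rw [hU'cl] at hu
        rcases hu with hu | hu
        · exact hKUKV u (Or.inl hu) v hv (s.iseqv.trans hru (s.iseqv.symm hrv))
        · -- u ∈ closure WU, and u ∈ sat11 s KV since v R z, u R z
          have : u ∈ sat11 s KV := ⟨v, hv, s.iseqv.trans hrv (s.iseqv.symm hru)⟩
          exact hWUF u hu (Or.inl this)
      · rcases hv with hv | ⟨hvB, -⟩
        · exact hAV v (hA_satur z hzA v (s.iseqv.symm hrv)) hv
        · exact hAB v (hA_satur z hzA v (s.iseqv.symm hrv)) hvB
    obtain ⟨WV, hWVo, hCVWV, hWVc, hWVF⟩ := sep11 hCVc hFVcl hCVFV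
    set V' : Set X := V ∪ WV with hV'_def
    have hV'cl : closure V' = closure V ∪ closure WV := closure_union
    have hV'c : IsCompact (closure V') := hV'cl ▸ hVc.union hWVc
    refine ⟨⟨U', V'⟩, ⟨hUo.union hWUo, hVo.union hWVo, hU'c, hV'c, ?_, ?_, ?_⟩,
      Set.subset_union_left, Set.subset_union_left, ?_, ?_, ?_, ?_⟩
    · -- D (closure U') (closure V')
      intro u hu v hv hr
      rw [hV'cl] at hv
      rcases hv with hv | hv
      · rw [hU'cl] at hu
        rcases hu with hu | hu
        · exact hD u hu v hv hr
        · have : u ∈ sat11 s KV := ⟨v, Or.inl hv, s.iseqv.symm hr⟩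
          exact hWUF u hu (Or.inl this)
      · have : v ∈ sat11 s (closure U') := ⟨u, hu, hr⟩
        exact hWVF v hv (Or.inl this)
    · -- A ∩ closure V' = ∅
      intro z hzA hz
      rw [hV'cl] at hz
      rcases hz with hz | hz
      · exact hAV z hzA hz
      · exact hWVF z hz (Or.inr hzA)
    · -- B ∩ closure U' = ∅
      intro z hzB hz
      rw [hU'cl] at hz
      rcases hz with hz | hz
      · exact hBU z hzB hz
      · exact hWUF z hz (Or.inr hzB)
    · -- sat (closure U) ∩ closure O(n+1) ⊆ U'
      intro z ⟨hz1, hz2⟩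
      exact Or.inr (hCUWU ⟨sat11_mono s (Set.subset_union_left) hz1, hz2⟩)
    · -- A ∩ closure O(n+1) ⊆ U'
      intro z ⟨hz1, hz2⟩
      exact Or.inr (hCUWU ⟨subset_sat11 s KU (Or.inr ⟨hz1, hz2⟩), hz2⟩)
    · -- sat (closure V) ∩ closure O(n+1) ⊆ V'
      intro z ⟨hz1, hz2⟩
      exact Or.inr (hCVWV ⟨sat11_mono s (Set.subset_union_left) hz1, hz2⟩)
    · -- B ∩ closure O(n+1) ⊆ V'
      intro z ⟨hz1, hz2⟩
      exact Or.inr (hCVWV ⟨subset_sat11 s KV (Or.inr ⟨hz1, hz2⟩), hz2⟩)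
  -- build the sequence by recursion
  choose! G hG using hstep
  set f : ℕ → Set X × Set X := fun n =>
    Nat.rec (∅, ∅) (fun n prev => if h : Inv prev then G n prev else (∅, ∅)) n with hf_def
  have hInv0 : Inv (∅, ∅) := by
    refine ⟨isOpen_empty, isOpen_empty, ?_, ?_, ?_, ?_, ?_⟩ <;>
      simp [closure_empty]
  have hfsucc : ∀ n, f (n+1) = if h : Inv (f n) then G n (f n) else (∅, ∅) := fun n => rfl
  have hInvf : ∀ n, Inv (f n) := by
    intro n
    induction n with
    | zero => exact hInv0
    | succ n ih =>
      rw [hfsucc n, dif_pos ih]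
      exact (hG n (f n) ih).1
  have hfprop : ∀ n, (f n).1 ⊆ (f (n+1)).1 ∧ (f n).2 ⊆ (f (n+1)).2 ∧
      sat11 s (closure (f n).1) ∩ closure (O (n+1)) ⊆ (f (n+1)).1 ∧
      A ∩ closure (O (n+1)) ⊆ (f (n+1)).1 ∧
      sat11 s (closure (f n).2) ∩ closure (O (n+1)) ⊆ (f (n+1)).2 ∧
      B ∩ closure (O (n+1)) ⊆ (f (n+1)).2 := by
    intro n
    rw [hfsucc n, dif_pos (hInvf n)]
    exact (hG n (f n) (hInvf n)).2
  have hfmono1 : ∀ {n m : ℕ}, n ≤ m → (f n).1 ⊆ (f m).1 :=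
    fun {n m} h => monotone_nat_of_le_succ (fun k => (hfprop k).1) h
  have hfmono2 : ∀ {n m : ℕ}, n ≤ m → (f n).2 ⊆ (f m).2 :=
    fun {n m} h => monotone_nat_of_le_succ (fun k => (hfprop k).2.1) h
  set U : Set X := ⋃ n, (f n).1 with hU_def
  set V : Set X := ⋃ n, (f n).2 with hV_def
  have hUopen : IsOpen U := isOpen_iUnion fun n => (hInvf n).1
  have hVopen : IsOpen V := isOpen_iUnion fun n => (hInvf n).2.1
  -- A ⊆ U and B ⊆ V
  have hOin : ∀ k, O k ⊆ closure (O (k+1)) := fun k =>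
    (subset_closure.trans (hOmono k)).trans subset_closure
  have hAU : A ⊆ U := by
    intro z hz
    obtain ⟨k, hk⟩ := hmemO z
    exact Set.mem_iUnion.mpr ⟨k+1, (hfprop k).2.2.2.1 ⟨hz, hOin k hk⟩⟩
  have hBV : B ⊆ V := by
    intro z hz
    obtain ⟨k, hk⟩ := hmemO z
    exact Set.mem_iUnion.mpr ⟨k+1, (hfprop k).2.2.2.2.2 ⟨hz, hOin k hk⟩⟩
  -- U and V are saturated
  have hUsat : ∀ z ∈ U, ∀ w, s.r z w → w ∈ U := by
    intro z hz w hr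
    obtain ⟨n, hn⟩ := Set.mem_iUnion.mp hz
    obtain ⟨m, hm⟩ := hmemO w
    refine Set.mem_iUnion.mpr ⟨max n m + 1, (hfprop (max n m)).2.2.1 ⟨?_, ?_⟩⟩
    · exact ⟨z, subset_closure (hfmono1 (le_max_left n m) hn), hr⟩
    · exact hOin (max n m) (hOmono' (le_max_right n m) hm)
  have hVsat : ∀ z ∈ V, ∀ w, s.r z w → w ∈ V := by
    intro z hz w hr
    obtain ⟨n, hn⟩ := Set.mem_iUnion.mp hz
    obtain ⟨m, hm⟩ := hmemO w
    refine Set.mem_iUnion.mpr ⟨max n m + 1, (hfprop (max n m)).2.2.2.2.1 ⟨?_, ?_⟩⟩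
    · exact ⟨z, subset_closure (hfmono2 (le_max_left n m) hn), hr⟩
    · exact hOin (max n m) (hOmono' (le_max_right n m) hm)
  -- U and V are disjoint, and more: no element of U is related to an element of V
  have hUV : ∀ u ∈ U, ∀ v ∈ V, ¬ s.r u v := by
    intro u hu v hv hr
    obtain ⟨n, hn⟩ := Set.mem_iUnion.mp hu
    obtain ⟨m, hm⟩ := Set.mem_iUnion.mp hv
    exact (hInvf (max n m)).2.2.2.2.1 u (subset_closure (hfmono1 (le_max_left n m) hn))
      v (subset_closure (hfmono2 (le_max_right n m) hm)) hr
  -- saturated open sets descend to the quotient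
  have hpre : ∀ (S : Set X), (∀ z ∈ S, ∀ w, s.r z w → w ∈ S) →
      Quotient.mk s ⁻¹' (Quotient.mk s '' S) = S := by
    intro S hS
    ext z
    constructor
    · rintro ⟨w, hw, hww⟩
      exact hS w hw z (Quotient.exact hww)
    · intro hz
      exact ⟨z, hz, rfl⟩
  refine ⟨Quotient.mk s '' U, Quotient.mk s '' V, ?_, ?_, ⟨x, hAU (s.iseqv.refl x), rfl⟩,
    ⟨y, hBV (s.iseqv.refl y), rfl⟩, ?_⟩
  · rw [isOpen_coinduced]
    show IsOpen (Quotient.mk s ⁻¹' (Quotient.mk s '' U))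
    rw [hpre U hUsat]; exact hUopen
  · rw [isOpen_coinduced]
    show IsOpen (Quotient.mk s ⁻¹' (Quotient.mk s '' V))
    rw [hpre V hVsat]; exact hVopen
  · rw [Set.disjoint_left]
    rintro q ⟨u, hu, hq⟩ ⟨v, hv, hq'⟩
    exact hUV u hu v hv (Quotient.exact (hq.trans hq'.symm))
end

section
/- Let A be the topological disjoint union of ℝ and (0,∞) × ℝ, and let ∼ be the equivalence relation on A generated by identifying the point x of the first summand with the point (x,0) of the second summand for every x > 0. Let Q = A/∼ with the quotient topology and let q₀ ∈ Q be the class of the point 0 of the first summand. Then Q is not first-countable at q₀: there is no countable family of neighborhoods of q₀ such that every neighborhood of q₀ contains a member of the family. -/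
/-- The disjoint union `ℝ ⊔ ((0,∞) × ℝ)`. -/
abbrev GlueSpace : Type := ℝ ⊕ (Set.Ioi (0 : ℝ) × ℝ)

/-- The relation identifying `x > 0` in the first summand with `(x, 0)` in the second. -/
def glueRel : GlueSpace → GlueSpace → Prop := fun p q =>
  p = q ∨ (∃ x : Set.Ioi (0 : ℝ), p = Sum.inl (x : ℝ) ∧ q = Sum.inr (x, 0)) ∨
    (∃ x : Set.Ioi (0 : ℝ), q = Sum.inl (x : ℝ) ∧ p = Sum.inr (x, 0))

/-- The equivalence relation generated by identifying `x > 0` with `(x, 0)`. -/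
def glueSetoid : Setoid GlueSpace where
  r := glueRel
  iseqv := by
    constructor
    · intro a; exact Or.inl rfl
    · intro a b h
      rcases h with rfl | ⟨x, h1, h2⟩ | ⟨x, h1, h2⟩
      · exact Or.inl rfl
      · exact Or.inr (Or.inr ⟨x, h1, h2⟩)
      · exact Or.inr (Or.inl ⟨x, h1, h2⟩)
    · intro a b c hab hbc
      rcases hab with rfl | ⟨x, ha, hb⟩ | ⟨x, hb, ha⟩
      · exact hbc
      · rcases hbc with rfl | ⟨y, hb', hc⟩ | ⟨y, hc, hb'⟩
        · exact Or.inr (Or.inl ⟨x, ha, hb⟩)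
        · rw [hb] at hb'; cases hb'
        · rw [hb] at hb'
          have hxy : x = y := by
            have h2 := Sum.inr_injective hb'
            exact congrArg Prod.fst h2
          subst hxy
          exact Or.inl (by rw [ha, hc])
      · rcases hbc with rfl | ⟨y, hb', hc⟩ | ⟨y, hc, hb'⟩
        · exact Or.inr (Or.inr ⟨x, hb, ha⟩)
        · rw [hb] at hb'
          have hxy : x = y := Subtype.coe_injective (Sum.inl_injective hb')
          subst hxy
          exact Or.inl (by rw [ha, hc])
        · rw [hb] at hb'; cases hb'

/-- The quotient `Q = (ℝ ⊔ ((0,∞) × ℝ)) / ∼` is not first countable at the class of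
`0` in the first summand: no countable family of neighbourhoods of this point is a
neighbourhood basis. -/
theorem stmt_15 :
    ¬ ∃ Nb : ℕ → Set (Quotient glueSetoid),
      (∀ k, Nb k ∈ nhds (Quotient.mk glueSetoid (Sum.inl (0 : ℝ)))) ∧
      ∀ V ∈ nhds (Quotient.mk glueSetoid (Sum.inl (0 : ℝ))), ∃ k, Nb k ⊆ V := by
  rintro ⟨Nb, hmem, hbasis⟩
  set q0 : Quotient glueSetoid := Quotient.mk glueSetoid (Sum.inl (0 : ℝ)) with hq0
  have hO : ∀ k : ℕ, ∃ O : Set (Quotient glueSetoid),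
      O ⊆ Nb k ∧ IsOpen O ∧ q0 ∈ O := fun k => mem_nhds_iff.mp (hmem k)
  choose O hOsub hOopen hO0 using hO
  set T : ℕ → Set GlueSpace := fun k => Quotient.mk glueSetoid ⁻¹' O k with hT
  have hTopen : ∀ k, IsOpen (T k) := fun k => (hOopen k).preimage continuous_quotient_mk'
  have hT0 : ∀ k, Sum.inl (0:ℝ) ∈ T k := hO0
  -- choose points x k on the positive axis inside T k, with x k ≤ 1/(k+1)
  have hx : ∀ k : ℕ, ∃ x : ℝ, 0 < x ∧ x ≤ 1/((k:ℝ)+1) ∧ Sum.inl x ∈ T k := by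
    intro k
    have h1 : IsOpen (Sum.inl ⁻¹' T k : Set ℝ) := (isOpen_sum_iff.mp (hTopen k)).1
    rcases Metric.isOpen_iff.mp h1 0 (hT0 k) with ⟨ε, hε, hball⟩
    have hk1 : (0:ℝ) < 1/((k:ℝ)+1) := by positivity
    refine ⟨min (ε/2) (1/((k:ℝ)+1)), by positivity, min_le_right _ _, ?_⟩
    apply hball
    rw [Metric.mem_ball, Real.dist_eq, sub_zero, abs_of_pos (by positivity)]
    exact lt_of_le_of_lt (min_le_left _ _) (by linarith)
  choose x hx0 hxle hxT using hx
  -- the glued points (x k, 0) lie in T k by saturation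
  have hTinr0 : ∀ k, Sum.inr ((⟨x k, hx0 k⟩ : Set.Ioi (0:ℝ)), (0:ℝ)) ∈ T k := by
    intro k
    have heq : Quotient.mk glueSetoid (Sum.inr ((⟨x k, hx0 k⟩ : Set.Ioi (0:ℝ)), (0:ℝ)))
        = Quotient.mk glueSetoid (Sum.inl (x k)) :=
      Quotient.sound (Or.inr (Or.inr ⟨⟨x k, hx0 k⟩, rfl, rfl⟩))
    show Quotient.mk glueSetoid _ ∈ O k
    rw [heq]
    exact hxT k
  -- choose heights t k > 0 with (x k, t k) ∈ T k
  have ht : ∀ k : ℕ, ∃ t : ℝ, 0 < t ∧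
      Sum.inr ((⟨x k, hx0 k⟩ : Set.Ioi (0:ℝ)), t) ∈ T k := by
    intro k
    have h2 : IsOpen (Sum.inr ⁻¹' T k : Set (Set.Ioi (0:ℝ) × ℝ)) :=
      (isOpen_sum_iff.mp (hTopen k)).2
    have hcont : Continuous (fun s : ℝ => ((⟨x k, hx0 k⟩ : Set.Ioi (0:ℝ)), s)) :=
      continuous_const.prodMk continuous_id
    have h3 := (h2.preimage hcont)
    rcases Metric.isOpen_iff.mp h3 0 (hTinr0 k) with ⟨ε, hε, hball⟩
    refine ⟨ε/2, by positivity, hball ?_⟩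
    rw [Metric.mem_ball, Real.dist_eq, sub_zero, abs_of_pos (by positivity)]
    linarith
  choose t ht0 htT using ht
  set p : ℕ → (Set.Ioi (0:ℝ) × ℝ) := fun k => (⟨x k, hx0 k⟩, t k) with hp
  set D : Set (Set.Ioi (0:ℝ) × ℝ) := Set.range p with hD
  -- D is closed: its points march off to the (missing) boundary x = 0
  have hDclosed : IsClosed D := by
    rw [← isOpen_compl_iff, isOpen_iff_forall_mem_open]
    rintro ⟨a, b⟩ hab
    obtain ⟨K, hK⟩ := exists_nat_one_div_lt (show (0:ℝ) < a from a.2)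
    refine ⟨{q : Set.Ioi (0:ℝ) × ℝ | (1:ℝ)/((K:ℝ)+1) < q.1} ∩
      ⋂ k ∈ Finset.range K, ({p k}ᶜ : Set (Set.Ioi (0:ℝ) × ℝ)), ?_, ?_, ?_, ?_⟩
    · rintro q ⟨hq1, hq2⟩ ⟨k, hk⟩
      by_cases hkK : k < K
      · have := Set.mem_iInter₂.mp hq2 k (Finset.mem_range.mpr hkK)
        exact this hk.symm
      · push_neg at hkK
        have h1 : (q.1 : ℝ) = x k := by rw [← hk]
        have h2 : x k ≤ 1/((k:ℝ)+1) := hxle k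
        have h3 : 1/((k:ℝ)+1) ≤ 1/((K:ℝ)+1) := by
          apply one_div_le_one_div_of_le (by positivity)
          have : (K:ℝ) ≤ (k:ℝ) := Nat.cast_le.mpr hkK
          linarith
        have : (1:ℝ)/((K:ℝ)+1) < q.1 := hq1
        linarith
    · apply IsOpen.inter
      · exact isOpen_Ioi.preimage (continuous_subtype_val.comp continuous_fst)
      · exact isOpen_biInter_finset fun k _ => isClosed_singleton.isOpen_compl
    · exact hK
    · refine Set.mem_iInter₂.mpr fun k _ => ?_
      intro h
      exact hab ⟨k, h.symm⟩
  -- the punctured saturated open set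
  set U : Set GlueSpace := Set.range Sum.inl ∪ Sum.inr '' Dᶜ with hU
  have hUopen : IsOpen U := by
    rw [isOpen_sum_iff]
    constructor
    · have : Sum.inl ⁻¹' U = (Set.univ : Set ℝ) := by
        ext z; simp [hU]
      rw [this]; exact isOpen_univ
    · have : Sum.inr ⁻¹' U = Dᶜ := by
        ext z
        simp only [hU, Set.mem_preimage, Set.mem_union, Set.mem_range, Set.mem_image]
        constructor
        · rintro (⟨y, hy⟩ | ⟨q, hq, heq⟩)
          · exact (Sum.inl_ne_inr hy).elim
          · rwa [← Sum.inr_injective heq]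
        · intro h; exact Or.inr ⟨z, h, rfl⟩
      rw [this]; exact hDclosed.isOpen_compl
  have hD0 : ∀ y : Set.Ioi (0:ℝ), ((y, (0:ℝ)) : Set.Ioi (0:ℝ) × ℝ) ∉ D := by
    rintro y ⟨k, hk⟩
    have : t k = 0 := congrArg Prod.snd hk
    exact absurd this (ne_of_gt (ht0 k))
  have hsat : ∀ z w : GlueSpace, glueSetoid.r z w → z ∈ U → w ∈ U := by
    intro z w h hz
    rcases h with rfl | ⟨y, h1, h2⟩ | ⟨y, h1, h2⟩
    · exact hz
    · subst h2; exact Or.inr ⟨(y, 0), hD0 y, rfl⟩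
    · subst h1; exact Or.inl ⟨(y:ℝ), rfl⟩
  set V : Set (Quotient glueSetoid) := Quotient.mk glueSetoid '' U with hV
  have hpre : Quotient.mk glueSetoid ⁻¹' V = U := by
    apply Set.Subset.antisymm
    · rintro z ⟨u, hu, huz⟩
      exact hsat u z (Quotient.exact huz) hu
    · intro z hz; exact ⟨z, hz, rfl⟩
  have hVopen : IsOpen V := by
    rw [isOpen_coinduced]
    show IsOpen (Quotient.mk glueSetoid ⁻¹' V)
    rw [hpre]; exact hUopen
  have hVmem : V ∈ nhds q0 := hVopen.mem_nhds ⟨Sum.inl 0, Or.inl ⟨0, rfl⟩, rfl⟩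
  obtain ⟨k, hk⟩ := hbasis V hVmem
  have h1 : Quotient.mk glueSetoid (Sum.inr (p k)) ∈ V := hk (hOsub k (htT k))
  have h2 : Sum.inr (p k) ∈ U := by rw [← hpre]; exact h1
  rcases h2 with ⟨y, hy⟩ | ⟨q, hq, heq⟩
  · exact (Sum.inl_ne_inr hy).elim
  · exact hq (Sum.inr_injective heq ▸ Set.mem_range_self k)
end

section
/- Let c : ℝ → ℝ denote the odd real cube root, c(x) = sign(x)·|x|^{1/3}, and define f : ℝ × ℝ → ℝ by f(x,a) = x + c(x)·sin(1/|a|) for a ≠ 0 and f(x,0) = x. Then for every ε ∈ (0,1): (i) there exists a ∈ (0,ε) and r ∈ (0,ε) such that {x ∈ ℝ : f(x,a) = 0} = {0, r, −r}; and (ii) there exists a' ∈ (0,ε) such that {x ∈ ℝ : f(x,a') = 0} = {0}. -/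
/-- The odd real cube root `c(x) = sign x * |x| ^ (1/3)`. -/
noncomputable def oddCbrt (x : ℝ) : ℝ := Real.sign x * |x| ^ ((1 : ℝ) / 3)

/-- `f(x, a) = x + c(x) * sin (1/|a|)` for `a ≠ 0`, and `f(x, 0) = x`. -/
noncomputable def fStrat (x a : ℝ) : ℝ :=
  if a = 0 then x else x + oddCbrt x * Real.sin (1 / |a|)

lemma oddCbrt_cube (x : ℝ) : oddCbrt x ^ 3 = x := by
  unfold oddCbrt
  rw [mul_pow]
  have h1 : (|x| ^ ((1:ℝ)/3)) ^ (3:ℕ) = |x| := by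
    rw [← Real.rpow_natCast (|x| ^ ((1:ℝ)/3)) 3, ← Real.rpow_mul (abs_nonneg x)]
    norm_num
  rw [h1]
  rcases lt_trichotomy x 0 with h|h|h
  · rw [Real.sign_of_neg h, abs_of_neg h]; ring
  · simp [h]
  · rw [Real.sign_of_pos h, abs_of_pos h]; ring

lemma oddCbrt_neg (x : ℝ) : oddCbrt (-x) = - oddCbrt x := by
  unfold oddCbrt
  rw [abs_neg, Real.sign_neg]
  ring

lemma oddCbrt_pos (x : ℝ) (h : 0 < x) : oddCbrt x = x ^ ((1:ℝ)/3) := by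
  unfold oddCbrt
  rw [Real.sign_of_pos h, abs_of_pos h, one_mul]

/-- Stratawise transversality is not an open condition: for every `ε ∈ (0,1)` there are
`a, r ∈ (0, ε)` such that `f(·, a)` has zero set `{0, r, -r}`, and there is `a' ∈ (0, ε)`
such that `f(·, a')` has zero set `{0}`. -/
theorem stmt_16 (ε : ℝ) (h0 : 0 < ε) (h1 : ε < 1) :
    (∃ a ∈ Set.Ioo (0 : ℝ) ε, ∃ r ∈ Set.Ioo (0 : ℝ) ε,
      {x : ℝ | fStrat x a = 0} = {0, r, -r}) ∧
    (∃ a' ∈ Set.Ioo (0 : ℝ) ε, {x : ℝ | fStrat x a' = 0} = {0}) := by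
  have hπ : (0:ℝ) < Real.pi := Real.pi_pos
  obtain ⟨n, hn⟩ := exists_nat_gt (1 / ε / Real.pi)
  have hnπ : 1 / ε < n * Real.pi := by
    rwa [div_lt_iff₀ hπ] at hn
  have hεinv : 0 < 1 / ε := by positivity
  constructor
  · -- part (i)
    set s : ℝ := ε / 2 with hs
    have hs0 : 0 < s := by positivity
    have hs1 : s < 1 := by linarith
    set r : ℝ := s * Real.sqrt s with hr
    have hsq : Real.sqrt s ^ 2 = s := Real.sq_sqrt hs0.le
    have hsqpos : 0 < Real.sqrt s := Real.sqrt_pos.mpr hs0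
    have hsqlt : Real.sqrt s < 1 := by
      nlinarith [Real.sq_sqrt hs0.le]
    have hr0 : 0 < r := by positivity
    have hrε : r < ε := by nlinarith
    set t : ℝ := (Real.pi + Real.arcsin s) + n * (2 * Real.pi) with ht
    have harc : 0 ≤ Real.arcsin s := le_of_lt (Real.arcsin_pos.mpr hs0)
    have htbig : 1 / ε < t := by
      have : (n:ℝ) * Real.pi ≤ n * (2 * Real.pi) := by nlinarith [n.cast_nonneg (α := ℝ)]
      nlinarith
    have ht0 : 0 < t := lt_trans hεinv htbig
    have hsin : Real.sin t = -s := by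
      rw [ht, Real.sin_add_nat_mul_two_pi, Real.sin_add, Real.sin_pi, Real.cos_pi,
        Real.sin_arcsin (by linarith) hs1.le]
      ring
    refine ⟨1 / t, ⟨by positivity, ?_⟩, r, ⟨hr0, hrε⟩, ?_⟩
    · rw [div_lt_iff₀ ht0]
      rw [div_lt_iff₀ h0] at htbig
      linarith
    · have htne : 1 / t ≠ 0 := by positivity
      have habs : 1 / |1 / t| = t := by
        rw [abs_of_pos (by positivity), one_div_one_div]
      ext x
      simp only [Set.mem_setOf_eq, Set.mem_insert_iff, Set.mem_singleton_iff, fStrat,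
        if_neg htne, habs, hsin]
      constructor
      · intro hx
        have hx' : x = s * oddCbrt x := by linarith
        have hcube : x ^ 3 = s ^ 3 * x := by
          have := congrArg (· ^ 3) hx'
          simp only [mul_pow, oddCbrt_cube] at this
          exact this
        have hfac : x * ((x - r) * (x + r)) = 0 := by
          have hr2 : r ^ 2 = s ^ 3 := by
            rw [hr]; linear_combination s ^ 2 * hsq
          linear_combination hcube - x * hr2
        rcases mul_eq_zero.mp hfac with h | h
        · exact Or.inl h
        · rcases mul_eq_zero.mp h with h | h
          · exact Or.inr (Or.inl (by linarith))
          · exact Or.inr (Or.inr (by linarith))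
      · have hcr : oddCbrt r = Real.sqrt s := by
          rw [oddCbrt_pos r hr0]
          have : r = Real.sqrt s ^ (3:ℕ) := by rw [hr]; linear_combination -Real.sqrt s * hsq
          rw [this, ← Real.rpow_natCast (Real.sqrt s) 3,
            ← Real.rpow_mul hsqpos.le]
          norm_num
        rintro (rfl | rfl | rfl)
        · simp [oddCbrt]
        · rw [hcr, hr]; ring
        · rw [oddCbrt_neg, hcr, hr]; ring
  · -- part (ii)
    have hn1 : 0 < (n:ℝ) * Real.pi := lt_trans hεinv hnπ
    refine ⟨1 / (n * Real.pi), ⟨by positivity, ?_⟩, ?_⟩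
    · rw [div_lt_iff₀ hn1]
      rw [div_lt_iff₀ h0] at hnπ
      linarith
    · have hne : 1 / ((n:ℝ) * Real.pi) ≠ 0 := by positivity
      have habs : 1 / |1 / ((n:ℝ) * Real.pi)| = n * Real.pi := by
        rw [abs_of_pos (by positivity), one_div_one_div]
      ext x
      simp only [Set.mem_setOf_eq, Set.mem_singleton_iff, fStrat, if_neg hne, habs,
        Real.sin_nat_mul_pi, mul_zero, add_zero]
end
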